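/- Let s, r ≥ 0 with s + r ≥ 1, let K_1, …, K_s and F_1, …, F_r be finite fields, let d_1, …, d_r be integers with each d_j ≥ 2, and let R = K_1 × ⋯ × K_s × M_{d_1}(F_1) × ⋯ × M_{d_r}(F_r). Then the complement of the unitary Cayley graph G_R is connected if and only if R is not a field, i.e., if and only if it is not the case that s = 1 and r = 0. -/

import Mathlib

/-- The unitary Cayley graph of a ring `R`: distinct vertices `a, b` are adjacent iff
`a - b` is a unit. -/
def unitaryCayleyGraph (R : Type*) [Ring R] : SimpleGraph R :=
  SimpleGraph.fromRel (fun a b => IsUnit (a - b))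

lemma ucg_compl_adj {R : Type*} [Ring R] {x y : R} (hne : x ≠ y)
    (h : ¬ IsUnit (x - y)) : (unitaryCayleyGraph R)ᶜ.Adj x y := by
  rw [SimpleGraph.compl_adj]
  refine ⟨hne, ?_⟩
  rw [unitaryCayleyGraph, SimpleGraph.fromRel_adj]
  rintro ⟨-, hu | hu⟩
  · exact h hu
  · exact h (by simpa using hu.neg)

lemma ucg_compl_reach {R : Type*} [Ring R] (x p : R) (hp : ¬ IsUnit p) :
    (unitaryCayleyGraph R)ᶜ.Reachable x (x + p) := by
  by_cases h0 : p = 0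
  · subst h0; rw [add_zero]
  · refine (ucg_compl_adj ?_ ?_).reachable
    · simp only [ne_eq, left_eq_add]; exact h0
    · have : x - (x + p) = -p := by abel
      rw [this]
      intro hu
      exact hp (by simpa using hu.neg)

lemma ucg_compl_connected {R : Type*} [Ring R]
    (h2 : ∀ z : R, ∃ p q : R, ¬ IsUnit p ∧ ¬ IsUnit q ∧ p + q = z) :
    (unitaryCayleyGraph R)ᶜ.Connected := by
  rw [SimpleGraph.connected_iff]
  refine ⟨fun x y => ?_, ⟨0⟩⟩
  obtain ⟨p, q, hp, hq, hpq⟩ := h2 (y - x)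
  have h1 := ucg_compl_reach x p hp
  have h2' := ucg_compl_reach (x + p) q hq
  have : x + p + q = y := by rw [add_assoc, hpq]; abel
  rw [this] at h2'
  exact h1.trans h2'

theorem stmt8 (s r : ℕ) (hsr : 1 ≤ s + r)
    (K : Fin s → Type*) [∀ i, Field (K i)] [∀ i, Fintype (K i)]
    (F : Fin r → Type*) [∀ j, Field (F j)] [∀ j, Fintype (F j)]
    (d : Fin r → ℕ) (hd : ∀ j, 2 ≤ d j) :
    (unitaryCayleyGraph
        ((∀ i, K i) × ∀ j, Matrix (Fin (d j)) (Fin (d j)) (F j)))ᶜ.Connected ↔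
      ¬ (s = 1 ∧ r = 0) := by
  set A := ∀ i, K i with hA
  set B := ∀ j, Matrix (Fin (d j)) (Fin (d j)) (F j) with hB
  -- helper: nonunit detection via components
  have notUnit_fst : ∀ (p : A × B) (i : Fin s), p.1 i = 0 → ¬ IsUnit p := by
    intro p i hpi hu
    have := hu.map ((Pi.evalRingHom K i).comp (RingHom.fst A B))
    simp only [RingHom.coe_comp, Function.comp_apply, RingHom.coe_fst,
      Pi.evalRingHom_apply] at this
    rw [hpi] at this
    exact not_isUnit_zero this
  have notUnit_snd : ∀ (p : A × B) (j : Fin r),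
      (∀ b, p.2 j ⟨0, by have := hd j; omega⟩ b = 0) ∨ (∀ b, p.2 j ⟨1, by have := hd j; omega⟩ b = 0) →
      ¬ IsUnit p := by
    intro p j hrow hu
    have hu' := hu.map ((Pi.evalRingHom _ j).comp (RingHom.snd A B))
    simp only [RingHom.coe_comp, Function.comp_apply, RingHom.coe_snd,
      Pi.evalRingHom_apply] at hu'
    rw [Matrix.isUnit_iff_isUnit_det] at hu'
    rcases hrow with h | h
    · rw [Matrix.det_eq_zero_of_row_eq_zero _ h] at hu'
      exact not_isUnit_zero hu'
    · rw [Matrix.det_eq_zero_of_row_eq_zero _ h] at hu'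
      exact not_isUnit_zero hu'
  constructor
  · -- connected → not a field
    rintro hconn ⟨hs, hr⟩
    subst hs; subst hr
    have hbot : (unitaryCayleyGraph (A × B))ᶜ = ⊥ := by
      ext x y
      simp only [SimpleGraph.compl_adj, SimpleGraph.bot_adj, iff_false, not_and, not_not]
      intro hne
      rw [unitaryCayleyGraph, SimpleGraph.fromRel_adj]
      refine ⟨hne, Or.inl ?_⟩
      -- x - y is a unit since x ≠ y and the ring is a field in disguise
      set z := x - y with hz
      have hz0 : z ≠ 0 := sub_ne_zero_of_ne hne
      have hz1 : z.1 ≠ 0 := by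
        intro h1
        apply hz0
        have h2 : z.2 = 0 := Subsingleton.elim _ _
        exact Prod.ext h1 h2
      have hz10 : z.1 0 ≠ 0 := by
        intro h0'
        apply hz1
        funext i
        have hi : i = 0 := Subsingleton.elim _ _
        rw [hi, h0']
        rfl
      rw [isUnit_iff_exists]
      refine ⟨(fun i => (z.1 i)⁻¹, z.2), ?_, ?_⟩ <;>
      · refine Prod.ext ?_ (Subsingleton.elim _ _)
        funext i
        have hi : i = 0 := Subsingleton.elim _ _
        subst hi
        simp only [Prod.mk_mul_mk, Pi.mul_apply, Prod.fst_mul]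
        first
        | exact mul_inv_cancel₀ hz10
        | exact inv_mul_cancel₀ hz10
    rw [hbot] at hconn
    have : Nontrivial (A × B) := by
      refine ⟨(fun _ => 0, fun j => j.elim0), (fun _ => 1, fun j => j.elim0), ?_⟩
      intro h
      have := congrArg (fun p => p.1 0) h
      exact zero_ne_one this
    exact SimpleGraph.not_connected_bot hconn
  · -- not a field → connected
    intro h
    apply ucg_compl_connected
    intro z
    by_cases hr : 1 ≤ r
    · -- use matrix row splitting at j₀
      set j₀ : Fin r := ⟨0, by omega⟩ with hj₀
      set P : B := fun j => Matrix.of fun a b =>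
        if a = (⟨0, by have := hd j; omega⟩ : Fin (d j)) then z.2 j a b else 0 with hP
      refine ⟨(z.1, P), (0, z.2 - P), ?_, ?_, ?_⟩
      · refine notUnit_snd _ j₀ (Or.inr ?_)
        intro b
        simp only [hP, Matrix.of_apply]
        rw [if_neg]
        intro hcon
        have := congrArg Fin.val hcon
        simp at this
      · refine notUnit_snd _ j₀ (Or.inl ?_)
        intro b
        rw [hP]
        show z.2 j₀ ⟨0, by have := hd j₀; omega⟩ b -
          (if (⟨0, by have := hd j₀; omega⟩ : Fin (d j₀)) = ⟨0, by have := hd j₀; omega⟩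
            then z.2 j₀ ⟨0, by have := hd j₀; omega⟩ b else 0) = 0
        rw [if_pos rfl, sub_self]
      · refine Prod.ext (by simp) ?_
        show P + (z.2 - P) = z.2
        abel
    · -- r = 0, so s ≥ 2
      have hr0 : r = 0 := by omega
      have hs1 : s ≠ 1 := fun hs => h ⟨hs, hr0⟩
      have hs2 : 2 ≤ s := by omega
      have h0s : 0 < s := by omega
      have h1s : 1 < s := by omega
      refine ⟨((fun i => if i = ⟨0, h0s⟩ then 0 else z.1 i), z.2),
              ((fun i => if i = ⟨0, h0s⟩ then z.1 i else 0), 0), ?_, ?_, ?_⟩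
      · exact notUnit_fst _ ⟨0, h0s⟩ (by simp)
      · refine notUnit_fst _ ⟨1, h1s⟩ ?_
        show (if (⟨1, h1s⟩ : Fin s) = ⟨0, h0s⟩ then z.1 ⟨1, h1s⟩ else 0) = 0
        rw [if_neg]
        simp [Fin.ext_iff]
      · refine Prod.ext ?_ (by simp)
        funext i
        simp only [Prod.fst_add, Pi.add_apply]
        by_cases hi : i = ⟨0, h0s⟩ <;> simp [hi]
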